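/- The confluent hypergeometric series ₀F₁ satisfies the product formula ₀F₁(c; x) · ₀F₁(c; y) = Σ_{r=0}^∞ (x y)^r / (r! (c)_r (c)_{2r}) · ₀F₁(c+2r; x+y), for all complex x, y and c not a nonpositive integer. -/

import Mathlib

open scoped ComplexConjugate

/-- Pochhammer symbol for complex arguments. -/
noncomputable def pochC (c : ℂ) (k : ℕ) : ℂ := ∏ i ∈ Finset.range k, (c + i)

/-- The confluent hypergeometric series `₀F₁`. -/
noncomputable def hyp0F1 (c x : ℂ) : ℂ := ∑' k : ℕ, x ^ k / (pochC c k * k.factorial)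

open Finset

lemma pochC_succ (c : ℂ) (k : ℕ) : pochC c (k + 1) = pochC c k * (c + k) := by
  simp [pochC, prod_range_succ]

lemma pochC_add (c : ℂ) (m n : ℕ) : pochC c (m + n) = pochC c m * pochC (c + m) n := by
  simp only [pochC, prod_range_add]
  congr 1
  refine prod_congr rfl fun i _ => ?_
  push_cast; ring

lemma pochC_ne_zero {c : ℂ} (hc : ∀ n : ℕ, c ≠ -(n : ℂ)) (k : ℕ) : pochC c k ≠ 0 := by
  refine prod_ne_zero_iff.mpr fun i _ h => hc i ?_
  linear_combination h

lemma pochC_reflect (a : ℂ) (k : ℕ) : pochC a k = (-1) ^ k * pochC (1 - a - k) k := by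
  cases k with
  | zero => simp [pochC]
  | succ n =>
    rw [pochC, ← prod_range_reflect]
    rw [pochC, show ((-1:ℂ))^(n+1) = ∏ _i ∈ range (n+1), (-1:ℂ) by simp, ← prod_mul_distrib]
    refine prod_congr rfl fun i hi => ?_
    rw [mem_range] at hi
    have h1 : ((n + 1 - 1 - i : ℕ) : ℂ) = (n : ℂ) - i := by
      have : n + 1 - 1 - i = n - i := by omega
      rw [this, Nat.cast_sub (by omega)]
    rw [h1]
    push_cast
    ring

lemma pochC_vandermonde (x y : ℂ) (m : ℕ) :
    pochC (x + y) m = ∑ r ∈ range (m + 1), (m.choose r : ℂ) * pochC x r * pochC y (m - r) := by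
  induction m with
  | zero => simp [pochC]
  | succ m ih =>
    have peel : ∑ r ∈ range (m + 2), (m.choose r : ℂ) * pochC x r * pochC y (m + 1 - r)
        = ∑ r ∈ range (m + 1), (m.choose (r + 1) : ℂ) * pochC x (r + 1) * pochC y (m - r)
          + pochC y (m + 1) := by
      rw [sum_range_succ' (fun r => (m.choose r : ℂ) * pochC x r * pochC y (m + 1 - r)) (m + 1)]
      simp only [Nat.choose_zero_right, Nat.cast_one, one_mul, Nat.sub_zero]
      congr 1
      · refine sum_congr rfl fun r _ => ?_
        have h : m + 1 - (r + 1) = m - r := by omega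
        rw [h]
      · simp [pochC]
    have drop : ∑ r ∈ range (m + 2), (m.choose r : ℂ) * pochC x r * pochC y (m + 1 - r)
        = ∑ r ∈ range (m + 1), (m.choose r : ℂ) * pochC x r * pochC y (m - r + 1) := by
      rw [sum_range_succ]
      simp only [Nat.choose_succ_self, Nat.cast_zero, zero_mul, add_zero]
      refine sum_congr rfl fun r hr => ?_
      rw [mem_range] at hr
      have h : m + 1 - r = m - r + 1 := by omega
      rw [h]
    rw [sum_range_succ' (fun r => ((m + 1).choose r : ℂ) * pochC x r * pochC y (m + 1 - r)) (m + 1)]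
    simp only [Nat.choose_zero_right, Nat.cast_one, one_mul, Nat.sub_zero]
    rw [show pochC x 0 = 1 by simp [pochC], one_mul]
    have pascal : ∀ r, ((m + 1).choose (r + 1) : ℂ) = (m.choose r : ℂ) + (m.choose (r + 1) : ℂ) := by
      intro r; rw [Nat.choose_succ_succ m r, Nat.cast_add]
    calc pochC (x + y) (m + 1)
        = (∑ r ∈ range (m + 1), (m.choose r : ℂ) * pochC x r * pochC y (m - r)) * (x + y + m) := by
          rw [pochC_succ, ih]
      _ = ∑ r ∈ range (m + 1), ((m.choose r : ℂ) * pochC x (r + 1) * pochC y (m - r)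
            + (m.choose r : ℂ) * pochC x r * pochC y (m - r + 1)) := by
          rw [sum_mul]
          refine sum_congr rfl fun r hr => ?_
          rw [mem_range] at hr
          have h1 : ((m : ℂ)) = (r : ℂ) + ((m - r : ℕ) : ℂ) := by
            rw [← Nat.cast_add]; congr 1; omega
          rw [pochC_succ, pochC_succ, h1]; ring
      _ = ∑ r ∈ range (m + 1), (m.choose r : ℂ) * pochC x (r + 1) * pochC y (m - r)
            + ∑ r ∈ range (m + 1), (m.choose r : ℂ) * pochC x r * pochC y (m - r + 1) := by
          rw [sum_add_distrib]
      _ = ∑ r ∈ range (m + 1), (m.choose r : ℂ) * pochC x (r + 1) * pochC y (m - r)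
            + (∑ r ∈ range (m + 1), (m.choose (r + 1) : ℂ) * pochC x (r + 1) * pochC y (m - r)
               + pochC y (m + 1)) := by rw [← drop, peel]
      _ = ∑ r ∈ range (m + 1), (↑((m + 1).choose (r + 1)) : ℂ) * pochC x (r + 1) * pochC y (m + 1 - (r + 1))
            + pochC y (m + 1) := by
          rw [← add_assoc, ← sum_add_distrib]
          congr 1
          refine sum_congr rfl fun r _ => ?_
          rw [pascal, show m + 1 - (r + 1) = m - r by omega]
          ring

lemma descFact_eq (n r : ℕ) :
    ((n.choose r * r.factorial : ℕ) : ℂ) = (-1) ^ r * pochC (-(n : ℂ)) r := by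
  rcases le_or_gt r n with h | h
  · have h1 : (n.choose r * r.factorial : ℕ) = n.descFactorial r := by
      rw [Nat.descFactorial_eq_factorial_mul_choose]; ring
    rw [h1, Nat.descFactorial_eq_prod_range, Nat.cast_prod]
    rw [pochC, show ((-1:ℂ))^r = ∏ _i ∈ range r, (-1:ℂ) by simp, ← prod_mul_distrib]
    refine prod_congr rfl fun i hi => ?_
    rw [mem_range] at hi
    rw [Nat.cast_sub (by omega)]
    ring
  · rw [Nat.choose_eq_zero_of_lt h]
    rw [pochC, prod_eq_zero (mem_range.mpr h) (by ring)]
    simp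

lemma key_identity (c : ℂ) (m n : ℕ) :
    ∑ r ∈ range (m + 1),
      (m.choose r : ℂ) * ((n.choose r * r.factorial : ℕ) : ℂ) * pochC (c + r) (m - r)
    = pochC (c + n) m := by
  have step : ∀ r ∈ range (m + 1),
      (m.choose r : ℂ) * ((n.choose r * r.factorial : ℕ) : ℂ) * pochC (c + r) (m - r)
      = (-1) ^ m * ((m.choose r : ℂ) * pochC (-(n : ℂ)) r * pochC (1 - c - m) (m - r)) := by
    intro r hr
    rw [mem_range] at hr
    rw [descFact_eq, pochC_reflect (c + r) (m - r)]
    have h1 : 1 - (c + r) - ((m - r : ℕ) : ℂ) = 1 - c - m := by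
      rw [Nat.cast_sub (by omega)]; ring
    have h2 : ((-1 : ℂ)) ^ r * ((-1 : ℂ)) ^ (m - r) = (-1) ^ m := by
      rw [← pow_add]; congr 1; omega
    rw [h1]
    calc (m.choose r : ℂ) * ((-1) ^ r * pochC (-(n:ℂ)) r) *
          ((-1) ^ (m - r) * pochC (1 - c - m) (m - r))
        = ((-1:ℂ)) ^ r * ((-1:ℂ)) ^ (m - r) *
            ((m.choose r : ℂ) * pochC (-(n:ℂ)) r * pochC (1 - c - m) (m - r)) := by ring
      _ = (-1) ^ m * ((m.choose r : ℂ) * pochC (-(n:ℂ)) r * pochC (1 - c - m) (m - r)) := by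
          rw [h2]
  rw [sum_congr rfl step, ← mul_sum, ← pochC_vandermonde]
  rw [pochC_reflect (c + n) m]
  congr 2
  ring

lemma pochC_norm_lower {c : ℂ} (hc : ∀ n : ℕ, c ≠ -(n : ℂ)) :
    ∃ ε : ℝ, 0 < ε ∧ ∀ k, ε ≤ ‖pochC c k‖ := by
  set N := ⌈‖c‖⌉₊ + 1 with hN
  have hone : ∀ i : ℕ, N ≤ i → (1 : ℝ) ≤ ‖c + i‖ := by
    intro i hi
    have h2 : ‖c‖ ≤ (⌈‖c‖⌉₊ : ℝ) := Nat.le_ceil _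
    have h3 : (N : ℝ) ≤ i := Nat.cast_le.mpr hi
    rw [hN] at h3
    push_cast at h3
    have h4 : ‖(i : ℂ)‖ ≤ ‖c + i‖ + ‖c‖ := by
      calc ‖(i : ℂ)‖ = ‖(c + i) - c‖ := by congr 1; ring
        _ ≤ ‖c + i‖ + ‖c‖ := norm_sub_le _ _
    rw [Complex.norm_natCast] at h4
    linarith
  have hmono : ∀ k, N ≤ k → ‖pochC c N‖ ≤ ‖pochC c k‖ := by
    intro k hk
    induction k, hk using Nat.le_induction with
    | base => exact le_refl _
    | succ k hk ih =>
      rw [pochC_succ c k, norm_mul]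
      calc ‖pochC c N‖ ≤ ‖pochC c k‖ := ih
        _ = ‖pochC c k‖ * 1 := (mul_one _).symm
        _ ≤ ‖pochC c k‖ * ‖c + k‖ :=
            mul_le_mul_of_nonneg_left (hone k hk) (norm_nonneg _)
  refine ⟨(range (N + 1)).inf' (by simp) (fun k => ‖pochC c k‖), ?_, ?_⟩
  · rw [Finset.lt_inf'_iff]
    intro b _
    exact norm_pos_iff.mpr (pochC_ne_zero hc b)
  · intro k
    rcases le_or_gt k N with h | h
    · exact Finset.inf'_le _ (mem_range.mpr (by omega))
    · exact le_trans (Finset.inf'_le _ (mem_range.mpr (by omega))) (hmono k h.le)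

lemma summable_norm_hyp {c : ℂ} {ε : ℝ} (hε : 0 < ε) (hle : ∀ k, ε ≤ ‖pochC c k‖) (x : ℂ) :
    Summable fun k : ℕ => ‖x ^ k / (pochC c k * (k.factorial : ℂ))‖ := by
  refine Summable.of_nonneg_of_le (fun _ => norm_nonneg _) (fun k => ?_)
    ((Real.summable_pow_div_factorial ‖x‖).mul_left (1 / ε))
  have hPk : (0 : ℝ) < ‖pochC c k‖ := lt_of_lt_of_le hε (hle k)
  have hfk : (0 : ℝ) < (k.factorial : ℝ) := by positivity
  rw [norm_div, norm_mul, norm_pow, Complex.norm_natCast]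
  calc ‖x‖ ^ k / (‖pochC c k‖ * k.factorial)
      = ‖x‖ ^ k / k.factorial * (1 / ‖pochC c k‖) := by
        ring
    _ ≤ ‖x‖ ^ k / k.factorial * (1 / ε) := by
        gcongr
        exact hle k
    _ = 1 / ε * (‖x‖ ^ k / k.factorial) := by ring
noncomputable def Hfun (c x y : ℂ) (t : ℕ × ℕ × ℕ) : ℂ :=
  x ^ (t.1 + t.2.1) * y ^ (t.1 + t.2.2) /
    (((t.1.factorial : ℂ) * t.2.1.factorial * t.2.2.factorial) *
      (pochC c t.1 * pochC c (2 * t.1 + t.2.1 + t.2.2)))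

lemma summable_norm_H {c : ℂ} {ε : ℝ} (hε : 0 < ε) (hle : ∀ k, ε ≤ ‖pochC c k‖) (x y : ℂ) :
    Summable fun t => ‖Hfun c x y t‖ := by
  have S3 : Summable fun p : ℕ × ℕ =>
      (‖x‖ ^ p.1 / p.1.factorial) * (‖y‖ ^ p.2 / p.2.factorial) :=
    (Real.summable_pow_div_factorial ‖x‖).mul_of_nonneg
      (Real.summable_pow_div_factorial ‖y‖) (fun _ => by positivity) (fun _ => by positivity)
  have SB : Summable fun t : ℕ × ℕ × ℕ =>
      ((‖x‖ * ‖y‖) ^ t.1 / t.1.factorial) *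
        ((‖x‖ ^ t.2.1 / t.2.1.factorial) * (‖y‖ ^ t.2.2 / t.2.2.factorial)) :=
    Summable.mul_of_nonneg (f := fun r : ℕ => (‖x‖ * ‖y‖) ^ r / r.factorial)
      (g := fun p : ℕ × ℕ => (‖x‖ ^ p.1 / p.1.factorial) * (‖y‖ ^ p.2 / p.2.factorial))
      (Real.summable_pow_div_factorial _) S3
      (fun _ => by positivity) (fun _ => by positivity)
  refine Summable.of_nonneg_of_le (fun _ => norm_nonneg _) (fun t => ?_) (SB.mul_left (1 / ε ^ 2))
  obtain ⟨r, i, j⟩ := t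
  have hfr : (0:ℝ) < (r.factorial : ℝ) := by positivity
  have hfi : (0:ℝ) < (i.factorial : ℝ) := by positivity
  have hfj : (0:ℝ) < (j.factorial : ℝ) := by positivity
  have keyP : ε ^ 2 ≤ ‖pochC c r‖ * ‖pochC c (2 * r + i + j)‖ := by
    rw [sq]; exact mul_le_mul (hle _) (hle _) hε.le (norm_nonneg _)
  calc ‖Hfun c x y (r, i, j)‖
      = ‖x‖ ^ (r + i) * ‖y‖ ^ (r + j) /
          (((r.factorial : ℝ) * i.factorial * j.factorial) *
            (‖pochC c r‖ * ‖pochC c (2 * r + i + j)‖)) := by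
        rw [Hfun]
        simp only [norm_div, norm_mul, norm_pow, Complex.norm_natCast]
    _ ≤ ‖x‖ ^ (r + i) * ‖y‖ ^ (r + j) /
          (((r.factorial : ℝ) * i.factorial * j.factorial) * ε ^ 2) := by
        gcongr
    _ = 1 / ε ^ 2 * (((‖x‖ * ‖y‖) ^ r / r.factorial) *
          ((‖x‖ ^ i / i.factorial) * (‖y‖ ^ j / j.factorial))) := by
        rw [pow_add, pow_add, mul_pow]
        ring
lemma antidiag_expand {c : ℂ} (hP : ∀ k, pochC c k ≠ 0) (x y : ℂ) (r k : ℕ) :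
    (x * y) ^ r / (r.factorial * pochC c r * pochC c (2 * r)) *
      ((x + y) ^ k / (pochC (c + 2 * r) k * k.factorial))
    = ∑ p ∈ antidiagonal k, Hfun c x y (r, p.1, p.2) := by
  have hpoch : ∀ k : ℕ, pochC c (2 * r) * pochC (c + 2 * (r : ℂ)) k = pochC c (2 * r + k) := by
    intro k
    rw [pochC_add c (2 * r) k]
    norm_num
  have hexp : (x + y) ^ k = ∑ p ∈ antidiagonal k, x ^ p.1 * y ^ p.2 * (k.choose p.1 : ℂ) := by
    rw [add_pow, Finset.Nat.sum_antidiagonal_eq_sum_range_succ_mk]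
  rw [hexp, sum_div, mul_sum]
  refine sum_congr rfl fun p hp => ?_
  rw [Finset.HasAntidiagonal.mem_antidiagonal] at hp
  obtain ⟨i, j⟩ := p
  simp only at hp
  subst hp
  rw [Hfun]
  simp only
  have hfact : ((i + j).choose i * i.factorial * j.factorial : ℕ) = (i + j).factorial := by
    have h := Nat.choose_mul_factorial_mul_factorial (Nat.le_add_right i j)
    rwa [Nat.add_sub_cancel_left] at h
  have hfactC : (((i + j).choose i : ℕ) : ℂ) * i.factorial * j.factorial = (i + j).factorial := by
    exact_mod_cast congrArg (Nat.cast (R := ℂ)) hfact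
  have hne : pochC (c + 2 * (r : ℂ)) (i + j) ≠ 0 := by
    intro h0
    apply hP (2 * r + (i + j))
    rw [← hpoch (i + j), h0, mul_zero]
  have f1 : ((r.factorial : ℂ)) ≠ 0 := Nat.cast_ne_zero.mpr r.factorial_ne_zero
  have f4 : (((i + j).factorial : ℂ)) ≠ 0 := Nat.cast_ne_zero.mpr (i + j).factorial_ne_zero
  rw [show 2 * r + i + j = 2 * r + (i + j) from by omega]
  rw [div_mul_div_comm, div_eq_div_iff
    (by exact mul_ne_zero (mul_ne_zero (mul_ne_zero f1 (hP r)) (hP (2 * r))) (mul_ne_zero hne f4))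
    (by exact mul_ne_zero (mul_ne_zero (mul_ne_zero f1 (Nat.cast_ne_zero.mpr i.factorial_ne_zero))
      (Nat.cast_ne_zero.mpr j.factorial_ne_zero)) (mul_ne_zero (hP r) (hP (2 * r + (i + j)))))]
  rw [← hpoch (i + j), ← hfactC]
  ring

lemma rhs_term {c : ℂ} (hP : ∀ k, pochC c k ≠ 0) {x y : ℂ}
    (hHsum : Summable (Hfun c x y)) (r : ℕ) :
    (x * y) ^ r / (r.factorial * pochC c r * pochC c (2 * r)) * hyp0F1 (c + 2 * r) (x + y)
    = ∑' q : ℕ × ℕ, Hfun c x y (r, q) := by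
  have hsq : Summable fun q : ℕ × ℕ => Hfun c x y (r, q) := hHsum.prod_factor r
  have hsig : Summable fun σ : Σ k : ℕ, ↥(antidiagonal k) => Hfun c x y (r, (σ.2 : ℕ × ℕ)) :=
    (Finset.HasAntidiagonal.sigmaAntidiagonalEquivProd.summable_iff
      (f := fun q : ℕ × ℕ => Hfun c x y (r, q))).mpr hsq
  calc (x * y) ^ r / (r.factorial * pochC c r * pochC c (2 * r)) * hyp0F1 (c + 2 * r) (x + y)
      = ∑' k : ℕ, (x * y) ^ r / (r.factorial * pochC c r * pochC c (2 * r)) *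
          ((x + y) ^ k / (pochC (c + 2 * r) k * k.factorial)) := by
        rw [hyp0F1, ← tsum_mul_left]
    _ = ∑' k : ℕ, ∑ p ∈ antidiagonal k, Hfun c x y (r, p.1, p.2) :=
        tsum_congr fun k => antidiag_expand hP x y r k
    _ = ∑' k : ℕ, ∑' p : ↥(antidiagonal k), Hfun c x y (r, (p : ℕ × ℕ)) :=
        tsum_congr fun k => (Finset.tsum_subtype (antidiagonal k)
          (fun p : ℕ × ℕ => Hfun c x y (r, p))).symm
    _ = ∑' σ : Σ k : ℕ, ↥(antidiagonal k), Hfun c x y (r, (σ.2 : ℕ × ℕ)) :=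
        (hsig.tsum_sigma).symm
    _ = ∑' q : ℕ × ℕ, Hfun c x y (r, q) :=
        Finset.HasAntidiagonal.sigmaAntidiagonalEquivProd.tsum_eq (fun q : ℕ × ℕ => Hfun c x y (r, q))
def groupEquiv : (ℕ × ℕ × ℕ) ≃ Σ p : ℕ × ℕ, {r : ℕ // r ∈ Finset.range (min p.1 p.2 + 1)} where
  toFun t := ⟨(t.1 + t.2.1, t.1 + t.2.2), ⟨t.1, by
    rw [Finset.mem_range]; omega⟩⟩
  invFun s := (s.2.1, s.1.1 - s.2.1, s.1.2 - s.2.1)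
  left_inv := by
    rintro ⟨r, i, j⟩
    simp
  right_inv := by
    rintro ⟨⟨m, n⟩, ⟨r, hr⟩⟩
    rw [Finset.mem_range] at hr
    refine Sigma.subtype_ext ?_ rfl
    simp only
    rw [Prod.mk.injEq]
    constructor <;> omega

lemma group_sum {c x y : ℂ} (hHsum : Summable (Hfun c x y)) :
    ∑' t : ℕ × ℕ × ℕ, Hfun c x y t
    = ∑' p : ℕ × ℕ, ∑ r ∈ Finset.range (min p.1 p.2 + 1), Hfun c x y (r, p.1 - r, p.2 - r) := by
  rw [← groupEquiv.symm.tsum_eq (Hfun c x y)]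
  have hs : Summable (fun s : (Σ p : ℕ × ℕ, {r : ℕ // r ∈ Finset.range (min p.1 p.2 + 1)}) =>
      Hfun c x y (groupEquiv.symm s)) := by
    have h := (groupEquiv.symm.summable_iff (f := Hfun c x y)).mpr hHsum
    exact h
  rw [hs.tsum_sigma]
  exact tsum_congr fun p =>
    Finset.tsum_subtype (Finset.range (min p.1 p.2 + 1))
      (fun r => Hfun c x y (r, p.1 - r, p.2 - r))

lemma coeff_identity {c : ℂ} (hc : ∀ n : ℕ, c ≠ -(n : ℂ)) (x y : ℂ) (m n : ℕ) :
    ∑ r ∈ Finset.range (min m n + 1), Hfun c x y (r, m - r, n - r)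
    = (x ^ m / (pochC c m * m.factorial)) * (y ^ n / (pochC c n * n.factorial)) := by
  have hP : ∀ k, pochC c k ≠ 0 := pochC_ne_zero hc
  have hcn : pochC c n * pochC (c + n) m = pochC c (m + n) := by
    rw [add_comm m n, pochC_add]
  have hPcn : pochC (c + (n : ℂ)) m ≠ 0 := by
    intro h0
    apply hP (m + n)
    rw [← hcn, h0, mul_zero]
  have step : ∀ r ∈ Finset.range (min m n + 1), Hfun c x y (r, m - r, n - r)
      = (x ^ m / (pochC c m * m.factorial)) * (y ^ n / (pochC c n * n.factorial)) /
          pochC (c + n) m *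
        ((m.choose r : ℂ) * ((n.choose r * r.factorial : ℕ) : ℂ) * pochC (c + r) (m - r)) := by
    intro r hr
    rw [Finset.mem_range] at hr
    have hrm : r ≤ m := by omega
    have hrn : r ≤ n := by omega
    rw [Hfun]
    simp only
    rw [show r + (m - r) = m from by omega, show r + (n - r) = n from by omega,
      show 2 * r + (m - r) + (n - r) = m + n from by omega]
    have hrm' : pochC c r * pochC (c + r) (m - r) = pochC c m := by
      rw [← pochC_add, show r + (m - r) = m from by omega]
    have hchm : ((m.choose r * (r.factorial * (m - r).factorial) : ℕ) : ℂ) = (m.factorial : ℂ) := by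
      exact_mod_cast congrArg (Nat.cast (R := ℂ))
        (by rw [← Nat.mul_assoc]; exact Nat.choose_mul_factorial_mul_factorial hrm)
    have hchn : ((n.choose r * (r.factorial * (n - r).factorial) : ℕ) : ℂ) = (n.factorial : ℂ) := by
      exact_mod_cast congrArg (Nat.cast (R := ℂ))
        (by rw [← Nat.mul_assoc]; exact Nat.choose_mul_factorial_mul_factorial hrn)
    push_cast at hchm hchn
    have f0 : ∀ s : ℕ, ((s.factorial : ℂ)) ≠ 0 := fun s => Nat.cast_ne_zero.mpr s.factorial_ne_zero
    rw [div_mul_div_comm, div_div, div_mul_eq_mul_div, div_eq_div_iff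
      (mul_ne_zero (mul_ne_zero (mul_ne_zero (f0 r) (f0 (m - r))) (f0 (n - r)))
        (mul_ne_zero (hP r) (hP (m + n))))
      (mul_ne_zero (mul_ne_zero (mul_ne_zero (hP m) (f0 m)) (mul_ne_zero (hP n) (f0 n))) hPcn)]
    push_cast
    rw [← hcn, ← hrm', ← hchm, ← hchn]
    ring
  rw [Finset.sum_congr rfl step, ← Finset.mul_sum]
  have extend : ∑ r ∈ Finset.range (min m n + 1),
      ((m.choose r : ℂ) * ((n.choose r * r.factorial : ℕ) : ℂ) * pochC (c + r) (m - r))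
      = ∑ r ∈ Finset.range (m + 1),
      ((m.choose r : ℂ) * ((n.choose r * r.factorial : ℕ) : ℂ) * pochC (c + r) (m - r)) := by
    refine Finset.sum_subset (Finset.range_subset_range.mpr (by omega)) ?_
    intro r hr hnr
    rw [Finset.mem_range] at hr
    rw [Finset.mem_range] at hnr
    have : n < r := by omega
    rw [Nat.choose_eq_zero_of_lt this]
    simp
  rw [extend, key_identity]
  exact div_mul_cancel₀ _ hPcn
theorem hyp0F1_product (c x y : ℂ) (hc : ∀ n : ℕ, c ≠ -(n : ℂ)) :
    hyp0F1 c x * hyp0F1 c y =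
      ∑' r : ℕ, (x * y) ^ r / (r.factorial * pochC c r * pochC c (2 * r)) *
        hyp0F1 (c + 2 * r) (x + y) := by
  obtain ⟨ε, hε, hle⟩ := pochC_norm_lower hc
  have hP : ∀ k, pochC c k ≠ 0 := pochC_ne_zero hc
  have hHsum : Summable (Hfun c x y) := (summable_norm_H hε hle x y).of_norm
  have hL : hyp0F1 c x * hyp0F1 c y
      = ∑' p : ℕ × ℕ, (x ^ p.1 / (pochC c p.1 * p.1.factorial)) *
          (y ^ p.2 / (pochC c p.2 * p.2.factorial)) := by
    rw [hyp0F1, hyp0F1]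
    exact tsum_mul_tsum_of_summable_norm (summable_norm_hyp hε hle x) (summable_norm_hyp hε hle y)
  calc hyp0F1 c x * hyp0F1 c y
      = ∑' p : ℕ × ℕ, (x ^ p.1 / (pochC c p.1 * p.1.factorial)) *
          (y ^ p.2 / (pochC c p.2 * p.2.factorial)) := hL
    _ = ∑' p : ℕ × ℕ, ∑ r ∈ Finset.range (min p.1 p.2 + 1), Hfun c x y (r, p.1 - r, p.2 - r) :=
        tsum_congr fun p => (coeff_identity hc x y p.1 p.2).symm
    _ = ∑' t : ℕ × ℕ × ℕ, Hfun c x y t := (group_sum hHsum).symm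
    _ = ∑' r : ℕ, ∑' q : ℕ × ℕ, Hfun c x y (r, q) := hHsum.tsum_prod' hHsum.prod_factor
    _ = ∑' r : ℕ, (x * y) ^ r / (r.factorial * pochC c r * pochC c (2 * r)) *
          hyp0F1 (c + 2 * r) (x + y) := tsum_congr fun r => (rhs_term hP hHsum r).symm
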